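/- Let α, β, γ ∈ ℂ be all nonzero. Then the ring ℂ[s0, s1, t] / (α·t + s0·s1, t² + β·s0 + γ·s1) is an integral domain; equivalently, the affine curve V(α·t + s0·s1, t² + β·s0 + γ·s1) ⊂ 𝔸³ is irreducible and reduced. -/

import Mathlib

section aux
open Polynomial

lemma aux1 (w v : ℂ) (hw : w ≠ 0) (d : Polynomial ℂ) :
    C w * X + d ^ 2 * X ^ 2 ≠ C v * d := by
  intro h
  rcases eq_or_ne d 0 with rfl | hd
  · simp only [ne_eq, zero_pow, zero_mul, add_zero, mul_zero] at h
    exact hw (by simpa using congrArg (fun p => p.coeff 1) h)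
  · have h2 := congrArg (fun p => p.coeff (2 * d.natDegree + 2)) h
    simp only [coeff_add, coeff_C_mul, coeff_X] at h2
    have hd2 : d.coeff (2 * d.natDegree + 2) = 0 :=
      coeff_eq_zero_of_natDegree_lt (by omega)
    rw [hd2, if_neg (by omega : ¬ (1 : ℕ) = 2 * d.natDegree + 2)] at h2
    have hc : (d ^ 2 * X ^ 2 : Polynomial ℂ).coeff (2 * d.natDegree + 2) =
        d.leadingCoeff ^ 2 := by
      rw [show (2 * d.natDegree + 2) = (d ^ 2).natDegree + 2 by rw [natDegree_pow]]
      rw [coeff_mul_X_pow, ← leadingCoeff, leadingCoeff_pow]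
    rw [hc] at h2
    have hld : d.leadingCoeff ≠ 0 := leadingCoeff_ne_zero.mpr hd
    simp only [mul_zero, mul_ite, mul_one] at h2
    exact pow_ne_zero 2 hld (by simpa using h2)

lemma gIrr (a b : ℂ) (ha : a ≠ 0) (hb : b ≠ 0) :
    Irreducible (C (X ^ 2) * X ^ 2 + C (C a) * X + C (C b * X) :
      Polynomial (Polynomial ℂ)) := by
  set g : Polynomial (Polynomial ℂ) := C (X ^ 2) * X ^ 2 + C (C a) * X + C (C b * X) with hg
  have hcoeff2 : g.coeff 2 = X ^ 2 := by
    simp only [hg, coeff_add, coeff_C_mul, coeff_X_pow, coeff_X, coeff_C]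
    norm_num
  have hcoeff1 : g.coeff 1 = C a := by
    simp only [hg, coeff_add, coeff_C_mul, coeff_X_pow, coeff_X, coeff_C]
    norm_num
  have hcoeff0 : g.coeff 0 = C b * X := by
    simp only [hg, coeff_add, coeff_C_mul, coeff_X_pow, coeff_X, coeff_C]
    norm_num
  have hYne : (X : Polynomial ℂ) ≠ 0 := X_ne_zero
  have hgdeg : g.natDegree = 2 := by
    rw [hg]; compute_degree!
  have hg0 : g ≠ 0 := fun h => by rw [h] at hgdeg; simp at hgdeg
  constructor
  · intro hu
    have := natDegree_eq_zero_of_isUnit hu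
    omega
  · intro p q hpq
    have hp0 : p ≠ 0 := fun h => hg0 (by simp [hpq, h])
    have hq0 : q ≠ 0 := fun h => hg0 (by simp [hpq, h])
    have hdeg : p.natDegree + q.natDegree = 2 := by
      rw [← natDegree_mul hp0 hq0, ← hpq, hgdeg]
    obtain hpd | hpd | hpd : p.natDegree = 0 ∨ p.natDegree = 1 ∨ p.natDegree = 2 := by omega
    · -- p constant
      left
      obtain ⟨c, rfl⟩ := natDegree_eq_zero.mp hpd
      have h1 : c * q.coeff 1 = C a := by
        rw [← coeff_C_mul, ← hpq, hcoeff1]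
      rw [isUnit_C]
      exact isUnit_of_mul_isUnit_left (h1 ▸ (isUnit_C.mpr (Ne.isUnit ha)))
    · -- deg p = deg q = 1
      exfalso
      have hqd : q.natDegree = 1 := by omega
      set c := p.coeff 1 with hc
      set d := p.coeff 0 with hd
      set e := q.coeff 1 with he
      set f := q.coeff 0 with hf
      have h2 : c * e = X ^ 2 := by
        have hlc := leadingCoeff_mul p q
        rw [← hpq] at hlc
        rw [leadingCoeff, leadingCoeff, leadingCoeff, hgdeg, hpd, hqd] at hlc
        rw [← hlc, hcoeff2]
      have h1 : d * e + c * f = C a := by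
        have h := coeff_mul p q 1
        rw [← hpq, hcoeff1, Finset.Nat.sum_antidiagonal_eq_sum_range_succ_mk,
          Finset.sum_range_succ, Finset.sum_range_one] at h
        rw [h]
      have h0 : d * f = C b * X := by
        rw [← mul_coeff_zero, ← hpq, hcoeff0]
      have hYp : Prime (X : Polynomial ℂ) := prime_X
      have hY2ce : (X : Polynomial ℂ) ^ 2 ∣ c * e := h2 ▸ dvd_refl _
      by_cases hYc : (X : Polynomial ℂ) ∣ c
      · by_cases hYe : (X : Polynomial ℂ) ∣ e
        · -- X divides C a : contradiction
          have hdvd : (X : Polynomial ℂ) ∣ C a :=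
            h1 ▸ dvd_add (Dvd.dvd.mul_left hYe d) (Dvd.dvd.mul_right hYc f)
          obtain ⟨t, ht⟩ := hdvd
          have := congrArg (fun p => Polynomial.eval 0 p) ht
          simp at this
          exact ha this
        · -- X^2 ∣ c, so e is a unit
          have hY2c : (X : Polynomial ℂ) ^ 2 ∣ c := hYp.pow_dvd_of_dvd_mul_right 2 hYe hY2ce
          obtain ⟨c', hcc⟩ := hY2c
          have hce : (X : Polynomial ℂ) ^ 2 * (c' * e) = X ^ 2 * 1 := by
            rw [mul_one]; linear_combination h2 - e * hcc
          have huE : c' * e = 1 := mul_left_cancel₀ (pow_ne_zero 2 hYne) hce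
          have hue' : IsUnit e := IsUnit.of_mul_eq_one (a := e) c' (by rw [mul_comm]; exact huE)
          obtain ⟨u0, hu, hue⟩ := Polynomial.isUnit_iff.mp hue'
          have hu0 : u0 ≠ 0 := by rintro rfl; simp at hu
          -- key equation in e, f
          have key : X ^ 2 * f ^ 2 + C b * X * e ^ 2 = C a * (e * f) := by
            linear_combination (-(e ^ 2)) * h0 + (-(f ^ 2)) * h2 + (e * f) * h1
          rw [← hue] at key
          apply aux1 (b * u0 ^ 2) (a * u0) (by simp [hb, hu0]) f
          rw [map_mul, map_mul, map_pow]
          calc C b * C u0 ^ 2 * X + f ^ 2 * X ^ 2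
              = X ^ 2 * f ^ 2 + C b * X * (C u0) ^ 2 := by ring
            _ = C a * C u0 * f := by rw [key]; ring
      · -- X^2 ∣ e, so c is a unit
        have hY2e : (X : Polynomial ℂ) ^ 2 ∣ e := hYp.pow_dvd_of_dvd_mul_left 2 hYc hY2ce
        obtain ⟨e', hee⟩ := hY2e
        have hce : (X : Polynomial ℂ) ^ 2 * (e' * c) = X ^ 2 * 1 := by
          rw [mul_one]; linear_combination h2 - c * hee
        have huE : e' * c = 1 := mul_left_cancel₀ (pow_ne_zero 2 hYne) hce
        have huc : IsUnit c := IsUnit.of_mul_eq_one (a := c) e' (by rw [mul_comm]; exact huE)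
        obtain ⟨u0, hu, hue⟩ := Polynomial.isUnit_iff.mp huc
        have hu0 : u0 ≠ 0 := by rintro rfl; simp at hu
        have key : C b * c ^ 2 * X + d ^ 2 * X ^ 2 = C a * (c * d) := by
          linear_combination (-(c ^ 2)) * h0 + (-(d ^ 2)) * h2 + (c * d) * h1
        rw [← hue] at key
        apply aux1 (b * u0 ^ 2) (a * u0) (by simp [hb, hu0]) d
        rw [map_mul, map_mul, map_pow]
        calc C b * C u0 ^ 2 * X + d ^ 2 * X ^ 2
            = C b * (C u0) ^ 2 * X + d ^ 2 * X ^ 2 := by ring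
          _ = C a * C u0 * d := by rw [key]; ring
    · -- q constant
      right
      have hqd : q.natDegree = 0 := by omega
      obtain ⟨c, rfl⟩ := natDegree_eq_zero.mp hqd
      have h1 : c * p.coeff 1 = C a := by
        rw [mul_comm p (C c)] at hpq
        rw [← coeff_C_mul, ← hpq, hcoeff1]
      rw [isUnit_C]
      exact isUnit_of_mul_isUnit_left (h1 ▸ (isUnit_C.mpr (Ne.isUnit ha)))

end aux

set_option maxHeartbeats 1000000 in
open MvPolynomial in
theorem stmt10 (α β γ : ℂ) (hα : α ≠ 0) (hβ : β ≠ 0) (hγ : γ ≠ 0) :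
    IsDomain ((MvPolynomial (Fin 3) ℂ) ⧸
      Ideal.span {C α * X 2 + X 0 * X 1, (X 2)^2 + C β * X 0 + C γ * X 1}) := by
  classical
  set I : Ideal (MvPolynomial (Fin 3) ℂ) :=
    Ideal.span {C α * X 2 + X 0 * X 1, (X 2)^2 + C β * X 0 + C γ * X 1} with hI
  set g : Polynomial (Polynomial ℂ) :=
    Polynomial.C (Polynomial.X ^ 2) * Polynomial.X ^ 2 +
      Polynomial.C (Polynomial.C (α * α * β)) * Polynomial.X +
      Polynomial.C (Polynomial.C (α * α * γ) * Polynomial.X) with hgdef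
  have hgirr : Irreducible g :=
    gIrr (α * α * β) (α * α * γ) (by simp [hα, hβ]) (by simp [hα, hγ])
  have hgprime : Prime g := (UniqueFactorizationMonoid.irreducible_iff_prime).mp hgirr
  set J : Ideal (Polynomial (Polynomial ℂ)) := Ideal.span {g} with hJ
  haveI hJprime : J.IsPrime := (Ideal.span_singleton_prime hgprime.ne_zero).mpr hgprime
  haveI : IsDomain (Polynomial (Polynomial ℂ) ⧸ J) := Ideal.Quotient.isDomain J
  -- the forward map
  set T : Polynomial (Polynomial ℂ) :=
    -(Polynomial.C (Polynomial.C α⁻¹)) * (Polynomial.X * Polynomial.C Polynomial.X) with hT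
  set φ0 : MvPolynomial (Fin 3) ℂ →ₐ[ℂ] (Polynomial (Polynomial ℂ) ⧸ J) :=
    aeval ![Ideal.Quotient.mkₐ ℂ J Polynomial.X,
      Ideal.Quotient.mkₐ ℂ J (Polynomial.C Polynomial.X),
      Ideal.Quotient.mkₐ ℂ J T] with hφ0
  have hz : (Polynomial.C (Polynomial.C α) * Polynomial.C (Polynomial.C α⁻¹) :
      Polynomial (Polynomial ℂ)) = 1 := by
    rw [← map_mul, ← map_mul, mul_inv_cancel₀ hα]; simp
  have halgJ : ∀ r : ℂ, algebraMap ℂ (Polynomial (Polynomial ℂ) ⧸ J) r =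
      Ideal.Quotient.mk J (Polynomial.C (Polynomial.C r)) := fun r => by
    rw [← Ideal.Quotient.mk_algebraMap]
    norm_cast
  have halgI : ∀ r : ℂ, algebraMap ℂ (MvPolynomial (Fin 3) ℂ ⧸ I) r =
      Ideal.Quotient.mk I (C r) := fun r => by
    rw [← Ideal.Quotient.mk_algebraMap, MvPolynomial.algebraMap_eq]
  have hgen1 : φ0 (C α * X 2 + X 0 * X 1) = 0 := by
    have key1 : (Polynomial.C (Polynomial.C α) * T +
        Polynomial.X * Polynomial.C Polynomial.X : Polynomial (Polynomial ℂ)) = 0 := by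
      rw [hT]
      linear_combination (-(Polynomial.X * Polynomial.C Polynomial.X)) * hz
    have : φ0 (C α * X 2 + X 0 * X 1) =
        Ideal.Quotient.mkₐ ℂ J (Polynomial.C (Polynomial.C α) * T +
          Polynomial.X * Polynomial.C Polynomial.X) := by
      simp only [hφ0, map_add, map_mul, aeval_X, aeval_C, Matrix.cons_val_zero,
        Matrix.cons_val_one, Matrix.head_cons, Matrix.cons_val_two, Matrix.tail_cons,
        Ideal.Quotient.mkₐ_eq_mk, halgJ]
      try ring
    rw [this, key1, map_zero]
  have hgsplit : g = Polynomial.C Polynomial.X ^ 2 * Polynomial.X ^ 2 +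
      Polynomial.C (Polynomial.C α) * Polynomial.C (Polynomial.C α) *
        Polynomial.C (Polynomial.C β) * Polynomial.X +
      Polynomial.C (Polynomial.C α) * Polynomial.C (Polynomial.C α) *
        Polynomial.C (Polynomial.C γ) * Polynomial.C Polynomial.X := by
    rw [hgdef]; simp only [map_mul, map_pow]; try ring
  have hgen2 : φ0 ((X 2) ^ 2 + C β * X 0 + C γ * X 1) = 0 := by
    have key2 : (T ^ 2 + Polynomial.C (Polynomial.C β) * Polynomial.X +
        Polynomial.C (Polynomial.C γ) * Polynomial.C Polynomial.X :
          Polynomial (Polynomial ℂ)) = Polynomial.C (Polynomial.C α⁻¹) ^ 2 * g := by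
      rw [hT]
      linear_combination (-(Polynomial.C (Polynomial.C α⁻¹)) ^ 2) * hgsplit +
        (-((Polynomial.C (Polynomial.C α) * Polynomial.C (Polynomial.C α⁻¹) + 1) *
          (Polynomial.C (Polynomial.C β) * Polynomial.X +
            Polynomial.C (Polynomial.C γ) * Polynomial.C Polynomial.X))) * hz
    have hmkg : Ideal.Quotient.mkₐ ℂ J g = 0 := by
      rw [Ideal.Quotient.mkₐ_eq_mk, Ideal.Quotient.eq_zero_iff_mem]
      exact Ideal.subset_span rfl
    have : φ0 ((X 2) ^ 2 + C β * X 0 + C γ * X 1) =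
        Ideal.Quotient.mkₐ ℂ J (T ^ 2 + Polynomial.C (Polynomial.C β) * Polynomial.X +
          Polynomial.C (Polynomial.C γ) * Polynomial.C Polynomial.X) := by
      simp only [hφ0, map_add, map_mul, map_pow, aeval_X, aeval_C, Matrix.cons_val_zero,
        Matrix.cons_val_one, Matrix.head_cons, Matrix.cons_val_two, Matrix.tail_cons,
        Ideal.Quotient.mkₐ_eq_mk, halgJ]
      try ring
    rw [this, key2, map_mul, hmkg]
    ring
  have hvanish : ∀ x ∈ I, φ0 x = 0 := by
    intro x hx
    rw [hI] at hx
    have hle : Ideal.span ({C α * X 2 + X 0 * X 1, (X 2)^2 + C β * X 0 + C γ * X 1} :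
        Set (MvPolynomial (Fin 3) ℂ)) ≤ RingHom.ker φ0.toRingHom := by
      rw [Ideal.span_le]
      rintro y (rfl | rfl)
      · exact hgen1
      · exact hgen2
    exact hle hx
  set φ' := Ideal.Quotient.liftₐ I φ0 hvanish with hφ'
  -- the backward map
  set inner : Polynomial ℂ →ₐ[ℂ] (MvPolynomial (Fin 3) ℂ ⧸ I) :=
    Polynomial.aeval (Ideal.Quotient.mk I (X 1)) with hinner
  set ψ0 : Polynomial (Polynomial ℂ) →ₐ[ℂ] (MvPolynomial (Fin 3) ℂ ⧸ I) :=
    Polynomial.aevalTower inner (Ideal.Quotient.mk I (X 0)) with hψ0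
  have hψg : ψ0 g = 0 := by
    have hP : ψ0 g = Ideal.Quotient.mk I ((X 1) ^ 2 * (X 0) ^ 2 +
        C (α * α * β) * X 0 + C (α * α * γ) * X 1) := by
      simp only [hgdef, hψ0, map_add, map_mul, map_pow, Polynomial.aevalTower_C,
        Polynomial.aevalTower_X, hinner, Polynomial.aeval_X, Polynomial.aeval_C, halgI]
      try ring
    rw [hP, Ideal.Quotient.eq_zero_iff_mem]
    have hcombo : ((X 1) ^ 2 * (X 0) ^ 2 + C (α * α * β) * X 0 + C (α * α * γ) * X 1 :
        MvPolynomial (Fin 3) ℂ) =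
        (X 0 * X 1 - C α * X 2) * (C α * X 2 + X 0 * X 1) +
        (C α * C α) * ((X 2) ^ 2 + C β * X 0 + C γ * X 1) := by
      simp only [map_mul]; ring
    rw [hcombo, hI]
    exact Ideal.add_mem _
      (Ideal.mul_mem_left _ _ (Ideal.subset_span (Set.mem_insert _ _)))
      (Ideal.mul_mem_left _ _ (Ideal.subset_span (Set.mem_insert_of_mem _ rfl)))
  set ψ' := Ideal.Quotient.liftₐ J ψ0 (by
    intro x hx
    rw [hJ, Ideal.mem_span_singleton] at hx
    obtain ⟨c, rfl⟩ := hx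
    rw [map_mul, hψg, zero_mul]) with hψ'
  have hcomp : ψ'.comp φ' = AlgHom.id ℂ (MvPolynomial (Fin 3) ℂ ⧸ I) := by
    apply Ideal.Quotient.algHom_ext
    apply MvPolynomial.algHom_ext
    intro i
    fin_cases i
    · simp [hφ', hψ', hφ0, hψ0, Ideal.Quotient.liftₐ_apply, Ideal.Quotient.mkₐ_eq_mk,
        Ideal.Quotient.lift_mk]
      erw [Ideal.Quotient.lift_mk, aeval_X, Ideal.Quotient.lift_mk]
      simp
    · simp [hφ', hψ', hφ0, hψ0, hinner, Ideal.Quotient.liftₐ_apply, Ideal.Quotient.mkₐ_eq_mk,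
        Ideal.Quotient.lift_mk]
      erw [Ideal.Quotient.lift_mk, aeval_X, Ideal.Quotient.lift_mk]
      simp
    · have hlift : ∀ y, ψ' (Ideal.Quotient.mk J y) = ψ0 y := fun y => by
        rw [hψ', Ideal.Quotient.liftₐ_apply]
        rfl
      have hlift' : ∀ y, φ' (Ideal.Quotient.mk I y) = φ0 y := fun y => by
        rw [hφ', Ideal.Quotient.liftₐ_apply]
        rfl
      simp only [AlgHom.comp_apply, Ideal.Quotient.mkₐ_eq_mk, AlgHom.coe_id, id_eq]
      rw [hlift']
      show ψ' (φ0 (X 2)) = Ideal.Quotient.mk I (X 2)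
      have h1 : φ0 (X 2) = Ideal.Quotient.mk J T := by
        simp [hφ0]
      rw [h1, hlift]
      have h2 : ψ0 T = Ideal.Quotient.mk I (-(C α⁻¹) * (X 0 * X 1)) := by
        rw [hT]
        simp only [map_mul, map_neg, hψ0, Polynomial.aevalTower_X, Polynomial.aevalTower_C,
          hinner, Polynomial.aeval_X, Polynomial.aeval_C, halgI, map_add]
        try ring
      rw [h2, Ideal.Quotient.mk_eq_mk_iff_sub_mem]
      have hzz : (C (α⁻¹ * α) : MvPolynomial (Fin 3) ℂ) = 1 := by
        rw [inv_mul_cancel₀ hα, map_one]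
      rw [map_mul] at hzz
      have hEq : (-(C α⁻¹) * (X 0 * X 1) - X 2 : MvPolynomial (Fin 3) ℂ) =
          (-(C α⁻¹)) * (C α * X 2 + X 0 * X 1) := by
        linear_combination (X 2 : MvPolynomial (Fin 3) ℂ) * hzz
      rw [hEq, hI]
      exact Ideal.mul_mem_left _ _ (Ideal.subset_span (Set.mem_insert _ _))
  have hleft : ∀ x, ψ' (φ' x) = x := fun x => by
    have := DFunLike.congr_fun hcomp x
    simpa using this
  exact Function.Injective.isDomain φ'.toRingHom (Function.LeftInverse.injective hleft)
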